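/- Suppose the data follow the general anticausal model with uniform label distributions, and let Φ = { x ↦ Ax + b : A ∈ R^{q×p}, b ∈ R^q }. Let φ_inv : R^p → R^r be a linear conditionally invariant feature map such that E[φ_inv(X^(1)) | Y^(1) = i] ≠ E[φ_inv(X^(1)) | Y^(1) = j] for all i ≠ j in {1,…,L}. Then any φ ∈ Φ satisfying the exact joint matching constraint P^(1)_{(φ, φ_inv)(X)} = P^T_{(φ, φ_inv)(X)} is conditionally invariant across P^(1) and P^T; in particular the population JointDIP feature map φ_j-DIP (a minimizer of R^(1)(g∘φ) over g ∈ G, φ ∈ Φ subject to this constraint) is conditionally invariant. If additionally r ≤ q, then R^T(h_j-DIP) ≤ min_{g ∈ G} R^T(g∘φ_inv⁰), where φ_inv⁰ = (φ_inv, 0_{q−r}) is φ_inv padded with q − r zero coordinates; and when φ_inv = φ* is the feature map of the optimal conditionally invariant classifier h*, R^T(h_j-DIP) ≤ R^T(h*). -/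

import Mathlib

open MeasureTheory ProbabilityTheory

noncomputable section

abbrev Vec (n : ℕ) := Fin n → ℝ

/-- 0-1 population risk. -/
def risk {p L : ℕ} (P : Measure (Vec p × Fin L)) (h : Vec p → Fin L) : ℝ :=
  (P {z | h z.1 ≠ z.2}).toReal

/-- Conditional law of `φ(X)` given `Y = y`. -/
def condLaw {p L : ℕ} {α : Type*} [MeasurableSpace α]
    (P : Measure (Vec p × Fin L)) (φ : Vec p → α) (y : Fin L) : Measure α :=
  (P[|{z | z.2 = y}]).map (fun z => φ z.1)

/-- Mean vector of a distribution on `ℝ^r`. -/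
def meanVec {r : ℕ} (Q : Measure (Vec r)) : Vec r := fun i => ∫ v, v i ∂Q

/-- Uniform distribution on `Fin L`. -/
def unifFin (L : ℕ) : Measure (Fin L) := ((L : ENNReal))⁻¹ • Measure.count

/-- The general anticausal data-generating distribution: `Y ~ μY`,
`X = f(Y) + ε` with `ε ~ Pε` independent of `Y`. -/
def anticausal {p L : ℕ} (μY : Measure (Fin L)) (f : Fin L → Vec p)
    (Pε : Measure (Vec p)) : Measure (Vec p × Fin L) :=
  (μY.prod Pε).map (fun w => (f w.1 + w.2, w.1))

/-- Padding `ℝ^r → ℝ^q` with zeros (for `r ≤ q`). -/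
def pad {r q : ℕ} (w : Vec r) : Vec q :=
  fun i => if hi : (i : ℕ) < r then w ⟨i, hi⟩ else 0

open Matrix

section Decomp

variable {p L : ℕ} (f : Fin L → Vec p) (Pε : Measure (Vec p)) [SFinite Pε]

lemma unif_prod_eq :
    (unifFin L).prod Pε = ((L : ENNReal))⁻¹ • ∑ y : Fin L, Pε.map (Prod.mk y) := by
  ext s hs
  rw [Measure.prod_apply hs]
  rw [Measure.smul_apply, Measure.coe_finset_sum, Finset.sum_apply]
  rw [unifFin, lintegral_smul_measure, MeasureTheory.lintegral_count, tsum_fintype]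
  congr 1
  exact Finset.sum_congr rfl fun y _ => (Measure.map_apply measurable_prodMk_left hs).symm

lemma measurable_acmap : Measurable (fun w : Fin L × Vec p => (f w.1 + w.2, w.1)) :=
  ((Measurable.of_discrete.comp measurable_fst).add measurable_snd).prodMk measurable_fst

lemma map_finset_sum_measure {α β : Type*} [MeasurableSpace α] [MeasurableSpace β]
    {g : α → β} (hg : Measurable g) {ι : Type*} (s : Finset ι) (μ : ι → Measure α) :
    Measure.map g (∑ i ∈ s, μ i) = ∑ i ∈ s, Measure.map g (μ i) := by
  classical
  induction s using Finset.induction_on with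
  | empty => simp
  | insert _ _ h ih => rw [Finset.sum_insert h, Finset.sum_insert h, Measure.map_add _ _ hg, ih]

lemma anticausal_eq_sum :
    anticausal (unifFin L) f Pε
      = ((L : ENNReal))⁻¹ • ∑ y : Fin L, Pε.map (fun e => (f y + e, y)) := by
  rw [anticausal, unif_prod_eq, Measure.map_smul,
    map_finset_sum_measure (measurable_acmap f)]
  congr 1
  refine Finset.sum_congr rfl fun y _ => ?_
  rw [Measure.map_map (measurable_acmap f) measurable_prodMk_left]
  rfl

lemma measurableEmbedding_slice (y : Fin L) :
    MeasurableEmbedding (fun e : Vec p => (f y + e, y)) := by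
  have h1 : MeasurableEmbedding (fun e : Vec p => f y + e) :=
    (MeasurableEquiv.addLeft (f y)).measurableEmbedding
  have h2 : MeasurableEmbedding (fun e : Vec p => (y, e)) :=
    measurableEmbedding_prodMk_left y
  have h3 : MeasurableEmbedding (Prod.swap : Fin L × Vec p → Vec p × Fin L) :=
    (MeasurableEquiv.prodComm (α := Fin L) (β := Vec p)).measurableEmbedding
  exact (h3.comp h2).comp h1

lemma anticausal_apply (s : Set (Vec p × Fin L)) :
    anticausal (unifFin L) f Pε s
      = ((L : ENNReal))⁻¹ * ∑ y : Fin L, Pε {e | (f y + e, y) ∈ s} := by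
  rw [anticausal_eq_sum, Measure.smul_apply, Measure.coe_finset_sum, Finset.sum_apply,
    smul_eq_mul]
  congr 1
  exact Finset.sum_congr rfl fun y _ => (measurableEmbedding_slice f y).map_apply _ _

end Decomp

section CondLaw

variable {p r L : ℕ} (hL : 0 < L) (f : Fin L → Vec p) (Pε : Measure (Vec p))
  [IsProbabilityMeasure Pε]

lemma restrict_finset_sum {α : Type*} [MeasurableSpace α] {ι : Type*} (s : Finset ι)
    (μ : ι → Measure α) (t : Set α) :
    (∑ i ∈ s, μ i).restrict t = ∑ i ∈ s, (μ i).restrict t := by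
  classical
  induction s using Finset.induction_on with
  | empty => simp
  | insert _ _ h ih => rw [Finset.sum_insert h, Finset.sum_insert h, Measure.restrict_add, ih]

lemma risk_anticausal (h : Vec p → Fin L) :
    risk (anticausal (unifFin L) f Pε) h
      = (((L : ENNReal))⁻¹ * ∑ y : Fin L, Pε {e | h (f y + e) ≠ y}).toReal := by
  rw [risk, anticausal_apply]
  rfl

include hL in
lemma condLaw_anticausal {α : Type*} [MeasurableSpace α] {φ : Vec p → α}
    (hφ : Measurable φ) (y : Fin L) :
    condLaw (anticausal (unifFin L) f Pε) φ y = Pε.map (fun e => φ (f y + e)) := by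
  classical
  have hLne : (L : ENNReal) ≠ 0 := Nat.cast_ne_zero.mpr hL.ne'
  have hS : MeasurableSet {z : Vec p × Fin L | z.2 = y} :=
    measurable_snd (measurableSet_singleton y)
  have hSapp : anticausal (unifFin L) f Pε {z | z.2 = y} = ((L : ENNReal))⁻¹ := by
    rw [anticausal_apply]
    have : ∀ y' : Fin L, Pε {e : Vec p | ((f y' + e, y') : Vec p × Fin L) ∈ {z | z.2 = y}}
        = if y' = y then 1 else 0 := by
      intro y'
      by_cases h : y' = y <;> simp [h, Set.setOf_mem_eq]
    rw [Finset.sum_congr rfl fun y' _ => this y']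
    simp
  have hrest : (anticausal (unifFin L) f Pε).restrict {z | z.2 = y}
      = ((L : ENNReal))⁻¹ • Pε.map (fun e => (f y + e, y)) := by
    rw [anticausal_eq_sum, Measure.restrict_smul, restrict_finset_sum]
    congr 1
    have : ∀ y' : Fin L, (Pε.map (fun e => (f y' + e, y'))).restrict {z | z.2 = y}
        = if y' = y then Pε.map (fun e => (f y + e, y)) else 0 := by
      intro y'
      rw [Measure.restrict_map (measurableEmbedding_slice f y').measurable hS]
      by_cases h : y' = y
      · subst h
        simp [Set.setOf_mem_eq]
      · have : (fun e : Vec p => (f y' + e, y')) ⁻¹' {z | z.2 = y} = ∅ := by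
          ext e; simp [h]
        simp [this, h]
    rw [Finset.sum_congr rfl fun y' _ => this y']
    simp
  have hcond : (anticausal (unifFin L) f Pε)[|{z | z.2 = y}]
      = Pε.map (fun e => (f y + e, y)) := by
    show (anticausal (unifFin L) f Pε {z | z.2 = y})⁻¹
        • (anticausal (unifFin L) f Pε).restrict {z | z.2 = y} = _
    rw [hSapp, hrest, smul_smul, inv_inv, ENNReal.mul_inv_cancel hLne
      (ENNReal.natCast_ne_top L), one_smul]
  rw [condLaw, hcond, Measure.map_map
    (show Measurable fun z : Vec p × Fin L => φ z.1 from hφ.comp measurable_fst)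
    (measurableEmbedding_slice f y).measurable]
  rfl

end CondLaw

section Integral

variable {p r L : ℕ} (f : Fin L → Vec p) (Pε : Measure (Vec p)) [IsProbabilityMeasure Pε]

lemma integral_anticausal {E : Type*} [NormedAddCommGroup E] [NormedSpace ℝ E]
    (F : Vec p × Fin L → E) (hint : ∀ y, Integrable (fun e => F (f y + e, y)) Pε) :
    ∫ z, F z ∂(anticausal (unifFin L) f Pε)
      = (L : ℝ)⁻¹ • ∑ y : Fin L, ∫ e, F (f y + e, y) ∂Pε := by
  rw [anticausal_eq_sum, integral_smul_measure,
    integral_finset_sum_measure (fun y _ =>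
      ((measurableEmbedding_slice f y).integrable_map_iff).mpr (hint y))]
  congr 1
  · simp [ENNReal.toReal_inv]
  · exact Finset.sum_congr rfl fun y _ =>
      (measurableEmbedding_slice f y).integral_map _

lemma measurable_affine {q : ℕ} (A : Matrix (Fin q) (Fin p) ℝ) (b : Vec q) :
    Measurable (fun x : Vec p => A.mulVec x + b) := by
  apply measurable_pi_lambda
  intro i
  have : (fun x : Vec p => (A.mulVec x + b) i) = fun x => (∑ j, A i j * x j) + b i := by
    funext x
    simp [Matrix.mulVec, dotProduct]
  rw [this]
  exact (Finset.measurable_sum _ fun j _ => (measurable_pi_apply j).const_mul _).add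
    measurable_const

variable (hmeanInt : ∀ i, Integrable (fun x : Vec p => x i) Pε)
  (hmean : ∀ i, ∫ x : Vec p, x i ∂Pε = 0)

include hmeanInt in
lemma integrable_mulVec_coord {q : ℕ} (A : Matrix (Fin q) (Fin p) ℝ) (k : Fin q) :
    Integrable (fun e : Vec p => A.mulVec e k) Pε := by
  have : (fun e : Vec p => A.mulVec e k) = fun e => ∑ j, A k j * e j := by
    funext e; simp [Matrix.mulVec, dotProduct]
  rw [this]
  exact integrable_finset_sum _ fun j _ => (hmeanInt j).const_mul _

include hmeanInt hmean in
lemma integral_mulVec_coord {q : ℕ} (A : Matrix (Fin q) (Fin p) ℝ) (k : Fin q) :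
    ∫ e : Vec p, A.mulVec e k ∂Pε = 0 := by
  have : (fun e : Vec p => A.mulVec e k) = fun e => ∑ j, A k j * e j := by
    funext e; simp [Matrix.mulVec, dotProduct]
  rw [this, integral_finset_sum _ fun j _ => (hmeanInt j).const_mul _]
  simp [integral_const_mul, hmean]

include hmeanInt hmean in
lemma meanVec_affine (B : Matrix (Fin r) (Fin p) ℝ) (c : Vec r) (v0 : Vec p) :
    meanVec (Pε.map (fun e => B.mulVec (v0 + e) + c)) = B.mulVec v0 + c := by
  funext i
  rw [meanVec, integral_map
    (show Measurable fun e : Vec p => B.mulVec (v0 + e) + c from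
      (measurable_affine B c).comp (measurable_const_add v0)).aemeasurable
    (measurable_pi_apply i).aestronglyMeasurable]
  have : (fun e : Vec p => (B.mulVec (v0 + e) + c) i)
      = fun e => (B.mulVec v0 i + c i) + B.mulVec e i := by
    funext e
    simp [Matrix.mulVec_add]
    ring
  rw [this, integral_add (integrable_const _) (integrable_mulVec_coord Pε hmeanInt B i),
    integral_const, integral_mulVec_coord Pε hmeanInt hmean B i]
  simp

end Integral

section ExpSum

lemma hasDerivAt_aux (a cy : ℂ) (τ : ℝ) :
    HasDerivAt (fun t : ℝ => a * Complex.exp (cy * t)) (a * cy * Complex.exp (cy * τ)) τ := by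
  have h0 : HasDerivAt (fun t : ℝ => (t : ℂ)) 1 τ := by
    simpa using (hasDerivAt_id τ).ofReal_comp
  have h1 : HasDerivAt (fun t : ℝ => cy * (t : ℂ)) cy τ := by
    simpa using h0.const_mul cy
  have h2 := h1.cexp
  have h3 := h2.const_mul a
  exact h3.congr_deriv (by ring)

lemma iteratedDeriv_expsum {L : ℕ} (c : Fin L → ℂ) (w : Fin L → ℂ) (n : ℕ) :
    iteratedDeriv n (fun τ : ℝ => ∑ y, w y * Complex.exp (c y * τ))
      = fun τ : ℝ => ∑ y, w y * c y ^ n * Complex.exp (c y * τ) := by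
  induction n with
  | zero => simp
  | succ n ih =>
    rw [iteratedDeriv_succ, ih]
    funext τ
    rw [deriv_fun_sum (fun y _ => (hasDerivAt_aux (w y * c y ^ n) (c y) τ).differentiableAt)]
    refine Finset.sum_congr rfl fun y _ => ?_
    rw [(hasDerivAt_aux (w y * c y ^ n) (c y) τ).deriv]
    ring

lemma expsum_one {L : ℕ} (c : Fin L → ℂ) (hc : Function.Injective c) (w : Fin L → ℂ)
    {δ : ℝ} (hδ : 0 < δ)
    (h : ∀ τ : ℝ, |τ| < δ → ∑ y, w y * Complex.exp (c y * τ) = 0) : w = 0 := by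
  classical
  set F : ℝ → ℂ := fun τ => ∑ y, w y * Complex.exp (c y * τ) with hF
  have hev : F =ᶠ[nhds (0 : ℝ)] fun _ => 0 := by
    filter_upwards [Metric.ball_mem_nhds (0 : ℝ) hδ] with τ hτ
    exact h τ (by simpa [Real.dist_eq] using hτ)
  have hiter : ∀ n, iteratedDeriv n F =ᶠ[nhds (0 : ℝ)] fun _ => 0 := by
    intro n
    induction n with
    | zero => simpa [iteratedDeriv_zero] using hev
    | succ n ih =>
      rw [iteratedDeriv_succ]
      have := ih.deriv
      simpa using this
  have hmom : ∀ n : ℕ, ∑ y, c y ^ n * w y = 0 := by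
    intro n
    have h0 : iteratedDeriv n F 0 = 0 := (hiter n).eq_of_nhds
    rw [hF, iteratedDeriv_expsum] at h0
    simpa [mul_comm, mul_assoc, mul_left_comm] using h0
  have hdet : ((Matrix.vandermonde c)ᵀ).det ≠ 0 := by
    rw [Matrix.det_transpose]
    exact Matrix.det_vandermonde_ne_zero_iff.mpr hc
  apply Matrix.eq_zero_of_mulVec_eq_zero hdet
  funext n
  have := hmom n
  simpa [Matrix.mulVec, dotProduct, Matrix.vandermonde, Matrix.transpose_apply] using this


lemma exists_separating_direction {r L : ℕ} (D : Fin L → Vec r) (hD : Function.Injective D) :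
    ∃ u : Vec r, Function.Injective (fun y => ∑ k, u k * D y k) := by
  classical
  set S : Fin L × Fin L → Set ℝ :=
    fun pr => {t | pr.1 ≠ pr.2 ∧ ∑ k : Fin r, (D pr.1 k - D pr.2 k) * t ^ (k : ℕ) = 0} with hS
  have hfin : ∀ pr, (S pr).Finite := by
    intro pr
    by_cases hpr : pr.1 = pr.2
    · have : S pr = ∅ := by ext t; simp [hS, hpr]
      simp [this]
    · set P : Polynomial ℝ :=
        ∑ k : Fin r, Polynomial.C (D pr.1 k - D pr.2 k) * Polynomial.X ^ (k : ℕ) with hP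
    -- P ≠ 0 since D pr.1 ≠ D pr.2
      have hne : D pr.1 ≠ D pr.2 := fun hc => hpr (hD hc)
      obtain ⟨k0, hk0⟩ : ∃ k0, D pr.1 k0 - D pr.2 k0 ≠ 0 := by
        by_contra hall
        push_neg at hall
        exact hne (funext fun k => by linarith [sub_eq_zero.mp (hall k)])
      have hPne : P ≠ 0 := by
        intro h0
        apply hk0
        have : P.coeff (k0 : ℕ) = D pr.1 k0 - D pr.2 k0 := by
          rw [hP, Polynomial.finset_sum_coeff]
          rw [Finset.sum_eq_single k0]
          · simp [sub_mul, Polynomial.coeff_sub, Polynomial.coeff_C_mul, Polynomial.coeff_X_pow]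
          · intro k _ hk
            have : ((k0 : ℕ) : ℕ) ≠ (k : ℕ) := fun hc => hk (Fin.ext hc).symm
            simp [sub_mul, Polynomial.coeff_sub, Polynomial.coeff_C_mul,
              Polynomial.coeff_X_pow, this]
          · intro hk0'
            exact absurd (Finset.mem_univ k0) hk0'
        rw [h0] at this
        simpa using this.symm
      have hsub : S pr ⊆ {t | P.IsRoot t} := by
        intro t ht
        have := ht.2
        simp only [Set.mem_setOf_eq, Polynomial.IsRoot, hP, Polynomial.eval_finset_sum,
          Polynomial.eval_mul, Polynomial.eval_C, Polynomial.eval_pow, Polynomial.eval_X]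
        exact this
      exact (Polynomial.finite_setOf_isRoot hPne).subset hsub
  obtain ⟨t, ht⟩ := (Set.finite_iUnion hfin).exists_notMem
  refine ⟨fun k => t ^ (k : ℕ), ?_⟩
  intro i j hij
  by_contra hne
  apply ht
  refine Set.mem_iUnion.mpr ⟨(i, j), ?_⟩
  refine ⟨hne, ?_⟩
  have : ∑ k : Fin r, (D i k - D j k) * t ^ (k : ℕ)
      = (∑ k : Fin r, t ^ (k : ℕ) * D i k) - ∑ k : Fin r, t ^ (k : ℕ) * D j k := by
    rw [← Finset.sum_sub_distrib]
    exact Finset.sum_congr rfl fun k _ => by ring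
  rw [this]
  simp only at hij
  rw [hij, sub_self]

lemma expsum_multi {r L : ℕ} (D : Fin L → Vec r) (hD : Function.Injective D)
    (w : Fin L → ℂ) {δ : ℝ} (hδ : 0 < δ)
    (h : ∀ s : Vec r, ‖s‖ < δ →
      ∑ y, w y * Complex.exp (((∑ k, s k * D y k : ℝ) : ℂ) * Complex.I) = 0) :
    w = 0 := by
  obtain ⟨u, hu⟩ := exists_separating_direction D hD
  set lam : Fin L → ℝ := fun y => ∑ k, u k * D y k with hlam
  have hcinj : Function.Injective (fun y => ((lam y : ℂ)) * Complex.I) := by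
    intro i j hij
    apply hu
    have := mul_right_cancel₀ Complex.I_ne_zero hij
    exact_mod_cast this
  have hδ' : 0 < δ / (‖u‖ + 1) := div_pos hδ (by positivity)
  refine expsum_one _ hcinj w hδ' ?_
  intro τ hτ
  have hnorm : ‖τ • u‖ < δ := by
    rw [norm_smul]
    calc ‖τ‖ * ‖u‖ ≤ |τ| * (‖u‖ + 1) := by
          rw [Real.norm_eq_abs]
          exact mul_le_mul_of_nonneg_left (by linarith) (abs_nonneg τ)
      _ < (δ / (‖u‖ + 1)) * (‖u‖ + 1) := by
          apply mul_lt_mul_of_pos_right hτ (by positivity)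
      _ = δ := by field_simp
  have := h (τ • u) hnorm
  have harg : ∀ y, (∑ k, (τ • u) k * D y k : ℝ) = τ * lam y := by
    intro y
    rw [hlam, Finset.mul_sum]
    exact Finset.sum_congr rfl fun k _ => by simp [smul_eq_mul]; ring
  calc ∑ y, w y * Complex.exp ((lam y : ℂ) * Complex.I * τ)
      = ∑ y, w y * Complex.exp (((∑ k, (τ • u) k * D y k : ℝ) : ℂ) * Complex.I) := by
        refine Finset.sum_congr rfl fun y _ => ?_
        rw [harg y]
        push_cast
        ring_nf
    _ = 0 := this

end ExpSum
section Analytic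
variable {p q r : ℕ} (Pε : Measure (Vec p)) [IsProbabilityMeasure Pε]

lemma measurable_mulVec (A : Matrix (Fin q) (Fin p) ℝ) :
    Measurable (fun x : Vec p => A.mulVec x) := by
  apply measurable_pi_lambda
  intro i
  have : (fun x : Vec p => A.mulVec x i) = fun x => ∑ j, A i j * x j := by
    funext x; simp [Matrix.mulVec, dotProduct]
  rw [this]
  exact Finset.measurable_sum _ fun j _ => (measurable_pi_apply j).const_mul _

def beta (B : Matrix (Fin r) (Fin p) ℝ) (s : Vec r) (e : Vec p) : ℝ :=
  ∑ i, s i * B.mulVec e i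

lemma measurable_beta (B : Matrix (Fin r) (Fin p) ℝ) (s : Vec r) :
    Measurable (beta B s) :=
  Finset.measurable_sum _ fun i _ =>
    ((measurable_pi_apply i).comp (measurable_mulVec B)).const_mul (s i)

def psi (B : Matrix (Fin r) (Fin p) ℝ) (s : Vec r) : ℂ :=
  ∫ e, Complex.exp ((beta B s e : ℂ) * Complex.I) ∂Pε

lemma integrable_exp_beta (B : Matrix (Fin r) (Fin p) ℝ) (s : Vec r) :
    Integrable (fun e => Complex.exp ((beta B s e : ℂ) * Complex.I)) Pε := by
  refine (integrable_const (1 : ℝ)).mono' ?_ ?_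
  · exact (Complex.continuous_exp.measurable.comp
      (((Complex.measurable_ofReal.comp (measurable_beta B s)).mul_const
        Complex.I))).aestronglyMeasurable
  · filter_upwards with e
    simp [Complex.norm_exp_ofReal_mul_I]

variable (hmeanInt : ∀ i, Integrable (fun x : Vec p => x i) Pε)

include hmeanInt in
lemma integrable_mulVec_coord' (A : Matrix (Fin q) (Fin p) ℝ) (k : Fin q) :
    Integrable (fun e : Vec p => A.mulVec e k) Pε := by
  have : (fun e : Vec p => A.mulVec e k) = fun e => ∑ j, A k j * e j := by
    funext e; simp [Matrix.mulVec, dotProduct]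
  rw [this]
  exact integrable_finset_sum _ fun j _ => (hmeanInt j).const_mul _

include hmeanInt in
lemma key_integral (A : Matrix (Fin q) (Fin p) ℝ) (k : Fin q)
    (B : Matrix (Fin r) (Fin p) ℝ) (s : Vec r) (a0 θ : ℝ) :
    ∫ e, ((a0 + A.mulVec e k : ℝ) : ℂ) * Complex.exp (((θ + beta B s e : ℝ) : ℂ) * Complex.I) ∂Pε
      = Complex.exp ((θ : ℂ) * Complex.I) *
        ((a0 : ℂ) * psi Pε B s
          + ∫ e, (A.mulVec e k : ℂ) * Complex.exp ((beta B s e : ℂ) * Complex.I) ∂Pε) := by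
  have hexp := integrable_exp_beta Pε B s
  have hint2 : Integrable
      (fun e => (A.mulVec e k : ℂ) * Complex.exp ((beta B s e : ℂ) * Complex.I)) Pε := by
    have hb := (integrable_mulVec_coord' Pε hmeanInt A k).ofReal (𝕜 := ℂ)
    have := hb.bdd_mul (c := 1)
      (Complex.continuous_exp.measurable.comp
        ((Complex.measurable_ofReal.comp (measurable_beta B s)).mul_const
          Complex.I)).aestronglyMeasurable
      (ae_of_all _ fun e => by simp [Complex.norm_exp_ofReal_mul_I])
    simpa [mul_comm] using this
  have heq : (fun e => ((a0 + A.mulVec e k : ℝ) : ℂ)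
        * Complex.exp (((θ + beta B s e : ℝ) : ℂ) * Complex.I))
      = fun e => Complex.exp ((θ : ℂ) * Complex.I) *
        ((a0 : ℂ) * Complex.exp ((beta B s e : ℂ) * Complex.I)
          + (A.mulVec e k : ℂ) * Complex.exp ((beta B s e : ℂ) * Complex.I)) := by
    funext e
    push_cast
    simp only [add_mul, Complex.exp_add]
    ring
  rw [heq, integral_const_mul, integral_add ((hexp.const_mul _)) hint2, integral_const_mul]
  rfl

lemma psi_continuous (B : Matrix (Fin r) (Fin p) ℝ) : Continuous (psi Pε B) := by
  apply continuous_of_dominated (bound := fun _ => (1 : ℝ))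
  · intro s
    exact (Complex.continuous_exp.measurable.comp
      ((Complex.measurable_ofReal.comp (measurable_beta B s)).mul_const
        Complex.I)).aestronglyMeasurable
  · intro s
    filter_upwards with e
    simp [Complex.norm_exp_ofReal_mul_I]
  · exact integrable_const 1
  · filter_upwards with e
    have hb : Continuous fun s : Vec r => beta B s e :=
      continuous_finset_sum _ fun i _ => (continuous_apply i).mul continuous_const
    exact Complex.continuous_exp.comp
      ((Complex.continuous_ofReal.comp hb).mul continuous_const)

lemma psi_zero (B : Matrix (Fin r) (Fin p) ℝ) : psi Pε B 0 = 1 := by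
  have : ∀ e : Vec p, beta B (0 : Vec r) e = 0 := by
    intro e; simp [_root_.beta]
  simp [psi, this]

lemma psi_ne_zero_near (B : Matrix (Fin r) (Fin p) ℝ) :
    ∃ δ > 0, ∀ s : Vec r, ‖s‖ < δ → psi Pε B s ≠ 0 := by
  have hc : ContinuousAt (psi Pε B) 0 := (psi_continuous Pε B).continuousAt
  rw [Metric.continuousAt_iff] at hc
  obtain ⟨δ, hδ, hball⟩ := hc 1 one_pos
  refine ⟨δ, hδ, fun s hs h0 => ?_⟩
  have := hball (by simpa [dist_zero_right] using hs)
  rw [h0, psi_zero] at this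
  simp at this

include hmeanInt in
lemma side_integral {L : ℕ} (f : Fin L → Vec p)
    (A : Matrix (Fin q) (Fin p) ℝ) (bq : Vec q) (k : Fin q)
    (B : Matrix (Fin r) (Fin p) ℝ) (c : Vec r) (s : Vec r) :
    ∫ z, ((z.1 k : ℝ) : ℂ) * Complex.exp (((∑ i, s i * z.2 i : ℝ) : ℂ) * Complex.I)
      ∂((anticausal (unifFin L) f Pε).map
          (fun z => (A.mulVec z.1 + bq, B.mulVec z.1 + c)))
    = (L : ℝ)⁻¹ • ∑ y,
        Complex.exp (((∑ i, s i * (B.mulVec (f y) + c) i : ℝ) : ℂ) * Complex.I) *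
          (((A.mulVec (f y) + bq) k : ℂ) * psi Pε B s
            + ∫ e, (A.mulVec e k : ℂ) * Complex.exp ((beta B s e : ℂ) * Complex.I) ∂Pε) := by
  have hg : Measurable (fun z : Vec p × Fin L =>
      (A.mulVec z.1 + bq, B.mulVec z.1 + c)) :=
    (((measurable_mulVec A).comp measurable_fst).add_const bq).prodMk
      (((measurable_mulVec B).comp measurable_fst).add_const c)
  have hF : Measurable (fun z : Vec q × Vec r =>
      ((z.1 k : ℝ) : ℂ) * Complex.exp (((∑ i, s i * z.2 i : ℝ) : ℂ) * Complex.I)) := by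
    apply Measurable.mul
    · exact Complex.measurable_ofReal.comp ((measurable_pi_apply k).comp measurable_fst)
    · exact Complex.continuous_exp.measurable.comp
        ((Complex.measurable_ofReal.comp
          (Finset.measurable_sum _ fun i _ =>
            (show Measurable fun z : Vec q × Vec r => s i * z.2 i from
              by fun_prop))).mul_const
          Complex.I)
  rw [integral_map hg.aemeasurable hF.aestronglyMeasurable]
  have hptwise : ∀ (y : Fin L) (e : Vec p),
      (((A.mulVec (f y + e) + bq) k : ℝ) : ℂ)
          * Complex.exp (((∑ i, s i * (B.mulVec (f y + e) + c) i : ℝ) : ℂ) * Complex.I)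
        = (((A.mulVec (f y) + bq) k + A.mulVec e k : ℝ) : ℂ)
          * Complex.exp ((((∑ i, s i * (B.mulVec (f y) + c) i) + beta B s e : ℝ) : ℂ)
              * Complex.I) := by
    intro y e
    have h1 : (A.mulVec (f y + e) + bq) k = (A.mulVec (f y) + bq) k + A.mulVec e k := by
      rw [Matrix.mulVec_add]; simp only [Pi.add_apply]; ring
    have h2 : ∑ i, s i * (B.mulVec (f y + e) + c) i
        = (∑ i, s i * (B.mulVec (f y) + c) i) + beta B s e := by
      rw [_root_.beta, ← Finset.sum_add_distrib]
      refine Finset.sum_congr rfl fun i _ => ?_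
      rw [Matrix.mulVec_add]; simp only [Pi.add_apply]; ring
    rw [h1, h2]
  have hinty : ∀ y : Fin L, Integrable (fun e =>
      (((A.mulVec (f y + e) + bq) k : ℝ) : ℂ)
        * Complex.exp (((∑ i, s i * (B.mulVec (f y + e) + c) i : ℝ) : ℂ) * Complex.I)) Pε := by
    intro y
    simp only [hptwise y]
    have hb : Integrable (fun e : Vec p =>
        (((A.mulVec (f y) + bq) k + A.mulVec e k : ℝ) : ℂ)) Pε :=
      ((integrable_const _).add (integrable_mulVec_coord' Pε hmeanInt A k)).ofReal
    have := hb.bdd_mul (c := 1)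
      (show AEStronglyMeasurable (fun e : Vec p => Complex.exp
          ((((∑ i, s i * (B.mulVec (f y) + c) i) + beta B s e : ℝ) : ℂ) * Complex.I)) Pε from
        (Complex.continuous_exp.measurable.comp
          ((Complex.measurable_ofReal.comp
            ((measurable_beta B s).const_add _)).mul_const Complex.I)).aestronglyMeasurable)
      (ae_of_all _ fun e => (Complex.norm_exp_ofReal_mul_I _).le)
    simpa [mul_comm] using this
  rw [integral_anticausal f Pε _ hinty]
  congr 1
  refine Finset.sum_congr rfl fun y _ => ?_
  show ∫ e, (((A.mulVec (f y + e) + bq) k : ℝ) : ℂ)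
      * Complex.exp (((∑ i, s i * (B.mulVec (f y + e) + c) i : ℝ) : ℂ) * Complex.I) ∂Pε = _
  simp only [hptwise y]
  exact key_integral Pε hmeanInt A k B s _ _

include hmeanInt in
lemma match_implies_A_eq {L : ℕ} (hL : 0 < L) (f1 f2 : Fin L → Vec p)
    (A : Matrix (Fin q) (Fin p) ℝ) (bq : Vec q)
    (B : Matrix (Fin r) (Fin p) ℝ) (c : Vec r)
    (hBeq : ∀ y, B.mulVec (f1 y) = B.mulVec (f2 y))
    (hDinj : Function.Injective fun y => B.mulVec (f1 y) + c)
    (hmatch : (anticausal (unifFin L) f1 Pε).map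
          (fun z => (A.mulVec z.1 + bq, B.mulVec z.1 + c))
        = (anticausal (unifFin L) f2 Pε).map
          (fun z => (A.mulVec z.1 + bq, B.mulVec z.1 + c))) :
    ∀ y, A.mulVec (f1 y) = A.mulVec (f2 y) := by
  have hLR : (L : ℝ)⁻¹ ≠ 0 := inv_ne_zero (Nat.cast_ne_zero.mpr hL.ne')
  obtain ⟨δ, hδ, hψ⟩ := psi_ne_zero_near Pε B
  intro y0
  funext k
  set w : Fin L → ℂ := fun y => ((A.mulVec (f1 y) k - A.mulVec (f2 y) k : ℝ) : ℂ) with hw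
  have hwzero : w = 0 := by
    apply expsum_multi (fun y => B.mulVec (f1 y) + c) hDinj w hδ
    intro s hs
    have hint := congrArg (fun μ => ∫ z, ((z.1 k : ℝ) : ℂ)
      * Complex.exp (((∑ i, s i * z.2 i : ℝ) : ℂ) * Complex.I) ∂μ) hmatch
    rw [side_integral Pε hmeanInt f1 A bq k B c s,
      side_integral Pε hmeanInt f2 A bq k B c s] at hint
    have hsump : (∑ y, Complex.exp (((∑ i, s i * (B.mulVec (f1 y) + c) i : ℝ) : ℂ)
              * Complex.I) *
            (((A.mulVec (f1 y) + bq) k : ℂ) * psi Pε B s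
              + ∫ e, (A.mulVec e k : ℂ) * Complex.exp ((beta B s e : ℂ) * Complex.I) ∂Pε))
        = ∑ y, Complex.exp (((∑ i, s i * (B.mulVec (f1 y) + c) i : ℝ) : ℂ) * Complex.I) *
            (((A.mulVec (f2 y) + bq) k : ℂ) * psi Pε B s
              + ∫ e, (A.mulVec e k : ℂ) * Complex.exp ((beta B s e : ℂ) * Complex.I) ∂Pε) := by
      apply smul_right_injective ℂ hLR
      refine hint.trans ?_
      congr 1
      refine Finset.sum_congr rfl fun y _ => ?_
      rw [← hBeq y]
    have hfact : psi Pε B s * ∑ y, w y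
        * Complex.exp (((∑ i, s i * (B.mulVec (f1 y) + c) i : ℝ) : ℂ) * Complex.I) = 0 := by
      have hzero : ∑ y, (Complex.exp (((∑ i, s i * (B.mulVec (f1 y) + c) i : ℝ) : ℂ)
              * Complex.I) *
            (((A.mulVec (f1 y) + bq) k : ℂ) * psi Pε B s
              + ∫ e, (A.mulVec e k : ℂ) * Complex.exp ((beta B s e : ℂ) * Complex.I) ∂Pε)
          - Complex.exp (((∑ i, s i * (B.mulVec (f1 y) + c) i : ℝ) : ℂ) * Complex.I) *
            (((A.mulVec (f2 y) + bq) k : ℂ) * psi Pε B s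
              + ∫ e, (A.mulVec e k : ℂ) * Complex.exp ((beta B s e : ℂ) * Complex.I) ∂Pε))
          = 0 := by
        rw [Finset.sum_sub_distrib, hsump, sub_self]
      rw [Finset.mul_sum, ← hzero]
      refine Finset.sum_congr rfl fun y _ => ?_
      rw [hw]
      simp only [Pi.add_apply, Complex.ofReal_sub, Complex.ofReal_add]
      push_cast
      ring
    rcases mul_eq_zero.mp hfact with h | h
    · exact absurd h (hψ s hs)
    · exact h
  have h0 := congrFun hwzero y0
  rw [hw] at h0
  simp only [Pi.zero_apply] at h0
  have h1 : (A.mulVec (f1 y0) k - A.mulVec (f2 y0) k : ℝ) = 0 := by exact_mod_cast h0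
  linarith

end Analytic

section Assembly

variable {p q r L : ℕ} (Pε : Measure (Vec p)) [IsProbabilityMeasure Pε]

lemma anticausal_map_eq (f1 f2 : Fin L → Vec p)
    (A : Matrix (Fin q) (Fin p) ℝ) (bq : Vec q)
    (B : Matrix (Fin r) (Fin p) ℝ) (c : Vec r)
    (hA : ∀ y, A.mulVec (f1 y) = A.mulVec (f2 y))
    (hB : ∀ y, B.mulVec (f1 y) = B.mulVec (f2 y)) :
    (anticausal (unifFin L) f1 Pε).map
        (fun z => (A.mulVec z.1 + bq, B.mulVec z.1 + c))
      = (anticausal (unifFin L) f2 Pε).map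
        (fun z => (A.mulVec z.1 + bq, B.mulVec z.1 + c)) := by
  have hg : Measurable (fun z : Vec p × Fin L =>
      (A.mulVec z.1 + bq, B.mulVec z.1 + c)) :=
    (((measurable_mulVec A).comp measurable_fst).add_const bq).prodMk
      (((measurable_mulVec B).comp measurable_fst).add_const c)
  rw [anticausal_eq_sum, anticausal_eq_sum, Measure.map_smul, Measure.map_smul,
    map_finset_sum_measure hg, map_finset_sum_measure hg]
  congr 1
  refine Finset.sum_congr rfl fun y _ => ?_
  rw [Measure.map_map hg (measurableEmbedding_slice f1 y).measurable,
    Measure.map_map hg (measurableEmbedding_slice f2 y).measurable]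
  congr 1
  funext e
  show (A.mulVec (f1 y + e) + bq, B.mulVec (f1 y + e) + c)
      = (A.mulVec (f2 y + e) + bq, B.mulVec (f2 y + e) + c)
  rw [Matrix.mulVec_add, Matrix.mulVec_add, Matrix.mulVec_add, Matrix.mulVec_add,
    hA y, hB y]

lemma risk_transfer (f1 f2 : Fin L → Vec p) (h1 h2 : Vec p → Fin L)
    (hpt : ∀ (y : Fin L) (e : Vec p), h1 (f1 y + e) = h2 (f2 y + e)) :
    risk (anticausal (unifFin L) f1 Pε) h1 = risk (anticausal (unifFin L) f2 Pε) h2 := by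
  rw [risk_anticausal, risk_anticausal]
  congr 2
  refine Finset.sum_congr rfl fun y _ => ?_
  congr 1
  ext e
  simp [hpt y e]

end Assembly


/-- **Theorem 4.4(b)**: under the general anticausal model with uniform labels, if
`φ_inv` is a linear conditionally invariant feature map whose conditional means separate
all labels, then any linear feature map satisfying the exact JointDIP matching constraint
is conditionally invariant across the first source and target; in particular the
population JointDIP feature map is, and, if `r ≤ q`, the JointDIP classifier beats any
classifier built on the zero-padded `φ_inv` — in particular the optimal conditionally
invariant classifier built on it. -/
theorem statement12 {p q r L M : ℕ} (hL : 0 < L) [NeZero M]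
    (Pε : Measure (Vec p)) [IsProbabilityMeasure Pε]
    (hmeanInt : ∀ i, Integrable (fun x => x i) Pε) (hmean : ∀ i, ∫ x, x i ∂Pε = 0)
    (fs : Fin M → Fin L → Vec p) (fT : Fin L → Vec p)
    (G : Set (Vec q → Fin L))
    (B : Matrix (Fin r) (Fin p) ℝ) (c : Vec r)
    (hCI : ∀ (m : Fin M) (y : Fin L),
      condLaw (anticausal (unifFin L) (fs m) Pε) (fun x => B.mulVec x + c) y =
        condLaw (anticausal (unifFin L) fT Pε) (fun x => B.mulVec x + c) y)
    (hsep : ∀ i j : Fin L, i ≠ j →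
      meanVec (condLaw (anticausal (unifFin L) (fs 0) Pε) (fun x => B.mulVec x + c) i) ≠
        meanVec (condLaw (anticausal (unifFin L) (fs 0) Pε) (fun x => B.mulVec x + c) j)) :
    -- (1) any linear feature map satisfying the joint matching constraint is
    -- conditionally invariant across the first source and the target
    (∀ (A : Matrix (Fin q) (Fin p) ℝ) (b : Vec q),
      ((anticausal (unifFin L) (fs 0) Pε).map
          (fun z => (A.mulVec z.1 + b, B.mulVec z.1 + c)) =
        (anticausal (unifFin L) fT Pε).map
          (fun z => (A.mulVec z.1 + b, B.mulVec z.1 + c))) →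
      ∀ y : Fin L,
        condLaw (anticausal (unifFin L) (fs 0) Pε) (fun x => A.mulVec x + b) y =
          condLaw (anticausal (unifFin L) fT Pε) (fun x => A.mulVec x + b) y) ∧
    -- (2) if `r ≤ q`, the population JointDIP classifier has target risk no greater than
    -- the best classifier built on the zero-padded `φ_inv`, and in particular no greater
    -- than that of the optimal conditionally invariant classifier when its feature map is
    -- the (padded) `φ_inv`.
    (r ≤ q →
      ∀ gJ ∈ G, ∀ (AJ : Matrix (Fin q) (Fin p) ℝ) (bJ : Vec q),
        ((anticausal (unifFin L) (fs 0) Pε).map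
            (fun z => (AJ.mulVec z.1 + bJ, B.mulVec z.1 + c)) =
          (anticausal (unifFin L) fT Pε).map
            (fun z => (AJ.mulVec z.1 + bJ, B.mulVec z.1 + c))) →
        (∀ g' ∈ G, ∀ (A' : Matrix (Fin q) (Fin p) ℝ) (b' : Vec q),
          ((anticausal (unifFin L) (fs 0) Pε).map
              (fun z => (A'.mulVec z.1 + b', B.mulVec z.1 + c)) =
            (anticausal (unifFin L) fT Pε).map
              (fun z => (A'.mulVec z.1 + b', B.mulVec z.1 + c))) →
          risk (anticausal (unifFin L) (fs 0) Pε) (fun x => gJ (AJ.mulVec x + bJ)) ≤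
            risk (anticausal (unifFin L) (fs 0) Pε) (fun x => g' (A'.mulVec x + b'))) →
        ((∀ g' ∈ G,
            risk (anticausal (unifFin L) fT Pε) (fun x => gJ (AJ.mulVec x + bJ)) ≤
              risk (anticausal (unifFin L) fT Pε)
                (fun x => g' (pad (B.mulVec x + c)))) ∧
          ∀ gstar ∈ G,
            (∀ (m : Fin M) (y : Fin L),
              condLaw (anticausal (unifFin L) (fs m) Pε)
                  (fun x => pad (B.mulVec x + c) : Vec p → Vec q) y =
                condLaw (anticausal (unifFin L) fT Pε)
                  (fun x => pad (B.mulVec x + c) : Vec p → Vec q) y) →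
            (∀ g' ∈ G, ∀ (A' : Matrix (Fin q) (Fin p) ℝ) (b' : Vec q),
              (∀ (m : Fin M) (y : Fin L),
                condLaw (anticausal (unifFin L) (fs m) Pε) (fun x => A'.mulVec x + b') y =
                  condLaw (anticausal (unifFin L) fT Pε) (fun x => A'.mulVec x + b') y) →
              risk (anticausal (unifFin L) fT Pε)
                  (fun x => gstar (pad (B.mulVec x + c))) ≤
                risk (anticausal (unifFin L) fT Pε) (fun x => g' (A'.mulVec x + b'))) →
            risk (anticausal (unifFin L) fT Pε) (fun x => gJ (AJ.mulVec x + bJ)) ≤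
              risk (anticausal (unifFin L) fT Pε)
                (fun x => gstar (pad (B.mulVec x + c))))) := by
  classical
  -- conditional means of the invariant features
  have hcondB : ∀ (f : Fin L → Vec p) (y : Fin L),
      condLaw (anticausal (unifFin L) f Pε) (fun x => B.mulVec x + c) y
        = Pε.map (fun e => B.mulVec (f y + e) + c) := fun f y =>
    condLaw_anticausal hL f Pε (measurable_affine B c) y
  have hmeanB : ∀ (f : Fin L → Vec p) (y : Fin L),
      meanVec (condLaw (anticausal (unifFin L) f Pε) (fun x => B.mulVec x + c) y)
        = B.mulVec (f y) + c := by
    intro f y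
    rw [hcondB f y]
    exact meanVec_affine Pε hmeanInt hmean B c (f y)
  have hBfs : ∀ (m : Fin M) (y : Fin L), B.mulVec (fs m y) = B.mulVec (fT y) := by
    intro m y
    have := congrArg meanVec (hCI m y)
    rw [hmeanB (fs m) y, hmeanB fT y] at this
    exact add_right_cancel this
  have hDinj : Function.Injective fun y => B.mulVec (fs 0 y) + c := by
    intro i j hij
    by_contra hne
    apply hsep i j hne
    rw [hmeanB (fs 0) i, hmeanB (fs 0) j]
    exact hij
  -- Part (1)
  have part1 : ∀ (A : Matrix (Fin q) (Fin p) ℝ) (b : Vec q),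
      ((anticausal (unifFin L) (fs 0) Pε).map
          (fun z => (A.mulVec z.1 + b, B.mulVec z.1 + c)) =
        (anticausal (unifFin L) fT Pε).map
          (fun z => (A.mulVec z.1 + b, B.mulVec z.1 + c))) →
      ∀ y, A.mulVec (fs 0 y) = A.mulVec (fT y) := by
    intro A b hmatch
    exact match_implies_A_eq Pε hmeanInt hL (fs 0) fT A b B c (hBfs 0) hDinj hmatch
  refine ⟨?_, ?_⟩
  · intro A b hmatch y
    rw [condLaw_anticausal hL (fs 0) Pε (measurable_affine A b) y,
      condLaw_anticausal hL fT Pε (measurable_affine A b) y]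
    congr 1
    funext e
    rw [Matrix.mulVec_add, Matrix.mulVec_add, part1 A b hmatch y]
  · intro _ gJ hgJ AJ bJ hmatchJ hoptJ
    have hAJ : ∀ y, AJ.mulVec (fs 0 y) = AJ.mulVec (fT y) := part1 AJ bJ hmatchJ
    -- padded feature map as an affine map
    set A' : Matrix (Fin q) (Fin p) ℝ :=
      fun i j => if hi : (i : ℕ) < r then B ⟨i, hi⟩ j else 0 with hA'
    set b' : Vec q := pad c with hb'
    have hpad : ∀ x : Vec p, pad (B.mulVec x + c) = A'.mulVec x + b' := by
      intro x
      funext i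
      have hsplit : (A'.mulVec x + b') i = A'.mulVec x i + pad c i := rfl
      rw [hsplit]
      by_cases hi : (i : ℕ) < r
      · have h1 : A'.mulVec x i = B.mulVec x ⟨i, hi⟩ := by
          simp only [Matrix.mulVec, dotProduct, hA', hi, dif_pos]
        simp only [pad]
        rw [dif_pos hi, dif_pos hi, h1]
        rfl
      · have h1 : A'.mulVec x i = 0 := by
          simp only [Matrix.mulVec, dotProduct, hA', hi, dif_neg, not_false_iff,
            zero_mul, Finset.sum_const_zero]
        simp only [pad]
        rw [dif_neg hi, dif_neg hi, h1, zero_add]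
    have hA'eq : ∀ y, A'.mulVec (fs 0 y) = A'.mulVec (fT y) := by
      intro y
      funext i
      by_cases hi : (i : ℕ) < r
      · have h1 : ∀ x : Vec p, A'.mulVec x i = B.mulVec x ⟨i, hi⟩ := by
          intro x
          simp only [Matrix.mulVec, dotProduct, hA', hi, dif_pos]
        rw [h1, h1, hBfs 0 y]
      · have h1 : ∀ x : Vec p, A'.mulVec x i = 0 := by
          intro x
          simp only [Matrix.mulVec, dotProduct, hA', hi, dif_neg, not_false_iff,
            zero_mul, Finset.sum_const_zero]
        rw [h1, h1]
    have hmatch' := anticausal_map_eq Pε (fs 0) fT A' b' B c hA'eq (hBfs 0)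
    have hmain : ∀ g' ∈ G,
        risk (anticausal (unifFin L) fT Pε) (fun x => gJ (AJ.mulVec x + bJ)) ≤
          risk (anticausal (unifFin L) fT Pε) (fun x => g' (pad (B.mulVec x + c))) := by
      intro g' hg'
      have hle := hoptJ g' hg' A' b' hmatch'
      have htJ : risk (anticausal (unifFin L) fT Pε) (fun x => gJ (AJ.mulVec x + bJ))
          = risk (anticausal (unifFin L) (fs 0) Pε) (fun x => gJ (AJ.mulVec x + bJ)) := by
        refine risk_transfer Pε fT (fs 0) _ _ fun y e => ?_
        show gJ (AJ.mulVec (fT y + e) + bJ) = gJ (AJ.mulVec (fs 0 y + e) + bJ)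
        rw [Matrix.mulVec_add, Matrix.mulVec_add, hAJ y]
      have htP : risk (anticausal (unifFin L) (fs 0) Pε)
            (fun x => g' (A'.mulVec x + b'))
          = risk (anticausal (unifFin L) fT Pε) (fun x => g' (pad (B.mulVec x + c))) := by
        refine risk_transfer Pε (fs 0) fT _ _ fun y e => ?_
        show g' (A'.mulVec (fs 0 y + e) + b') = g' (pad (B.mulVec (fT y + e) + c))
        rw [← hpad, Matrix.mulVec_add, Matrix.mulVec_add, hBfs 0 y]
      rw [htJ, ← htP]
      exact hle
    exact ⟨hmain, fun gstar hgstar _ _ => hmain gstar hgstar⟩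


end
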